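/- The sum-form lower bound of Fu et al. holds: for channels Ψ(ρ)=∑_{i=1}^n L_i ρ L_i† and Φ(ρ)=∑_{i=1}^n K_i ρ K_i† and any permutation π of {1,…,n}, I_ρ(Ψ) + I_ρ(Φ) ≥ (1/2) ∑_{i=1}^n I_ρ(L_i + K_{π(i)}), and likewise with minus signs. -/
import Mathlib


open Matrix BigOperators Finset ComplexOrder

noncomputable def WY {d : ℕ} (S K : Matrix (Fin d) (Fin d) ℂ) : ℝ :=
  (1/2 : ℝ) * ((S * K - K * S)ᴴ * (S * K - K * S)).trace.re

lemma trace_conjTranspose_mul_self_re_nonneg {d : ℕ} (A : Matrix (Fin d) (Fin d) ℂ) :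
    0 ≤ (Aᴴ * A).trace.re := by
  simp only [Matrix.trace, Matrix.diag, Matrix.mul_apply, Matrix.conjTranspose_apply,
    Complex.re_sum]
  apply Finset.sum_nonneg; intro i _
  apply Finset.sum_nonneg; intro j _
  simp only [Complex.star_def, Complex.mul_re, Complex.conj_re, Complex.conj_im]
  nlinarith [sq_nonneg ((A j i).re), sq_nonneg ((A j i).im)]

lemma WY_nonneg {d : ℕ} (S K : Matrix (Fin d) (Fin d) ℂ) : 0 ≤ WY S K := by
  have := trace_conjTranspose_mul_self_re_nonneg (S * K - K * S)
  unfold WY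
  positivity

lemma WY_parallelogram {d : ℕ} (S L K : Matrix (Fin d) (Fin d) ℂ) :
    WY S (L + K) + WY S (L - K) = 2 * WY S L + 2 * WY S K := by
  unfold WY
  have e1 : S * (L + K) - (L + K) * S = (S * L - L * S) + (S * K - K * S) := by
    noncomm_ring
  have e2 : S * (L - K) - (L - K) * S = (S * L - L * S) - (S * K - K * S) := by
    noncomm_ring
  rw [e1, e2]
  set A := S * L - L * S
  set B := S * K - K * S
  have h1 : (A + B)ᴴ * (A + B) = Aᴴ * A + Aᴴ * B + Bᴴ * A + Bᴴ * B := by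
    simp [Matrix.conjTranspose_add]; noncomm_ring
  have h2 : (A - B)ᴴ * (A - B) = Aᴴ * A - Aᴴ * B - Bᴴ * A + Bᴴ * B := by
    simp [Matrix.conjTranspose_sub]; noncomm_ring
  rw [h1, h2]
  simp only [Matrix.trace_add, Matrix.trace_sub, Complex.add_re, Complex.sub_re]
  ring

theorem wy_sum_bound_fu {d n : ℕ}
    (ρ S : Matrix (Fin d) (Fin d) ℂ)
    (hρ : ρ.PosSemidef) (htr : ρ.trace = 1)
    (hS : S.PosSemidef) (hS2 : S * S = ρ)
    (L K : Fin n → Matrix (Fin d) (Fin d) ℂ)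
    (hL : ∑ i, (L i)ᴴ * L i = 1) (hK : ∑ i, (K i)ᴴ * K i = 1)
    (π : Equiv.Perm (Fin n)) :
    ((∑ i, WY S (L i)) + (∑ i, WY S (K i)) ≥
      (1/2 : ℝ) * ∑ i, WY S (L i + K (π i)))
    ∧ ((∑ i, WY S (L i)) + (∑ i, WY S (K i)) ≥
      (1/2 : ℝ) * ∑ i, WY S (L i - K (π i))) := by
  have hKperm : (∑ i, WY S (K i)) = ∑ i, WY S (K (π i)) :=
    (Equiv.sum_comp π (fun i => WY S (K i))).symm
  have key : ∀ i, WY S (L i + K (π i)) + WY S (L i - K (π i)) =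
      2 * WY S (L i) + 2 * WY S (K (π i)) := fun i => WY_parallelogram S _ _
  have hsum : (∑ i, WY S (L i + K (π i))) + (∑ i, WY S (L i - K (π i))) =
      2 * ((∑ i, WY S (L i)) + (∑ i, WY S (K i))) := by
    rw [hKperm, ← Finset.sum_add_distrib]
    simp_rw [key]
    rw [Finset.sum_add_distrib, ← Finset.mul_sum, ← Finset.mul_sum]
    ring
  have h1 : 0 ≤ ∑ i, WY S (L i + K (π i)) :=
    Finset.sum_nonneg fun i _ => WY_nonneg _ _
  have h2 : 0 ≤ ∑ i, WY S (L i - K (π i)) :=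
    Finset.sum_nonneg fun i _ => WY_nonneg _ _
  constructor <;> linarith
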